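/- arXiv:1503.04045 — 2 statements merged into one kernel-verified Lean document; each statement's English description precedes it below -/
import Mathlib

section
/- Let δ : Σ → {a,b}* map symbols injectively to b a^i b (i ≥ 1), extended homomorphically, and suppose a palindromic factorization F of δ(S) is not composed entirely of preserved palindromes (images δ(P)). Then F begins with a (possibly empty) sequence of preserved palindromes followed by the single-symbol factor b, and also ends with the single-symbol factor b preceded by a (possibly empty) sequence of preserved palindromes, and these two occurrences of the factor b are distinct positions; hence F is not diverse. -/
/-- `F` is a palindromic factorization of `S`. -/
def PalFact {α : Type*} (S : List α) (F : List (List α)) : Prop :=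
  F.flatten = S ∧ ∀ f ∈ F, f ≠ [] ∧ f.reverse = f

/-- The block `b a^j b` over the binary alphabet `Bool` (`a = false`, `b = true`). -/
def blockBA (j : ℕ) : List Bool := true :: (List.replicate j false ++ [true])

/-- The block encoding of a string, sending symbol `s` to `b a^(i s) b`,
extended homomorphically. -/
def encBA {σ : Type*} (i : σ → ℕ) (w : List σ) : List Bool :=
  (w.map fun s => blockBA (i s)).flatten

/-- A preserved palindrome of `δ(S)`: the image `δ(P)` of a palindromic
substring `P` of `S`. -/
def Preserved {σ : Type*} (i : σ → ℕ) (S : List σ) (f : List Bool) : Prop :=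
  ∃ P : List σ, P <:+: S ∧ P.reverse = P ∧ f = encBA i P

section Aux

variable {σ : Type*} (i : σ → ℕ)

lemma encBA_nil : encBA i [] = [] := rfl

lemma encBA_cons (s : σ) (W : List σ) :
    encBA i (s :: W) = blockBA (i s) ++ encBA i W := by
  simp [encBA]

lemma encBA_append (P Q : List σ) :
    encBA i (P ++ Q) = encBA i P ++ encBA i Q := by
  simp [encBA]

lemma blockBA_reverse (j : ℕ) : (blockBA j).reverse = blockBA j := by
  simp [blockBA, List.reverse_cons, List.reverse_append]

lemma encBA_reverse (W : List σ) : (encBA i W).reverse = encBA i W.reverse := by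
  induction W with
  | nil => rfl
  | cons s W ih =>
    simp [encBA_cons, List.reverse_append, ih, encBA_append, blockBA_reverse]
    simp [encBA]

lemma rep_split (j : ℕ) (X u v : List Bool)
    (h : List.replicate j false ++ true :: X = u ++ true :: v) :
    (u = List.replicate j false ∧ X = v) ∨
    ∃ a, u = List.replicate j false ++ true :: a ∧ X = a ++ true :: v := by
  induction j generalizing u with
  | zero =>
    simp at h
    cases u with
    | nil => left; simpa using h
    | cons b u' =>
      right
      simp at h
      exact ⟨u', by simp [h.1], h.2⟩
  | succ j ih =>
    rw [List.replicate_succ] at h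
    cases u with
    | nil => simp at h
    | cons b u' =>
      simp at h
      obtain ⟨hb, h⟩ := h
      rcases ih u' h with ⟨h1, h2⟩ | ⟨a, h1, h2⟩
      · left; simp [List.replicate_succ, ← hb, h1, h2]
      · right; exact ⟨a, by simp [List.replicate_succ, ← hb, h1], h2⟩

lemma rep_true_inj (m n : ℕ) (x y : List Bool)
    (h : List.replicate m false ++ true :: x = List.replicate n false ++ true :: y) :
    m = n ∧ x = y := by
  induction m generalizing n with
  | zero =>
    cases n with
    | zero => simpa using h
    | succ n => rw [List.replicate_succ] at h; simp at h
  | succ m ih =>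
    cases n with
    | zero => rw [List.replicate_succ] at h; simp at h
    | succ n =>
      rw [List.replicate_succ, List.replicate_succ] at h
      simp at h
      obtain ⟨h1, h2⟩ := ih n h
      exact ⟨by omega, h2⟩

lemma encBA_inj (hinj : Function.Injective i) :
    ∀ P Q : List σ, encBA i P = encBA i Q → P = Q := by
  intro P
  induction P with
  | nil =>
    intro Q h
    cases Q with
    | nil => rfl
    | cons q Q => simp [encBA_nil, encBA_cons, blockBA] at h
  | cons p P ih =>
    intro Q h
    cases Q with
    | nil => simp [encBA_nil, encBA_cons, blockBA] at h
    | cons q Q =>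
      simp only [encBA_cons, blockBA, List.cons_append, List.append_assoc,
        List.cons.injEq, true_and] at h
      simp only [List.nil_append] at h
      obtain ⟨h1, h2⟩ := rep_true_inj _ _ _ _ h
      have : p = q := hinj h1
      rw [this, ih Q h2]

lemma encBA_cons_shape (hpos : ∀ s, 1 ≤ i s) (s : σ) (W : List σ) :
    ∃ t, encBA i (s :: W) = true :: false :: t := by
  obtain ⟨k, hk⟩ : ∃ k, i s = k + 1 := ⟨i s - 1, by have := hpos s; omega⟩
  refine ⟨List.replicate k false ++ [true] ++ encBA i W, ?_⟩
  simp [encBA_cons, blockBA, hk, List.replicate_succ]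

lemma encBA_last (P : List σ) (hne : P ≠ []) :
    ∃ u, encBA i P = u ++ [true] := by
  induction P using List.reverseRecOn with
  | nil => simp at hne
  | append_singleton P' p _ =>
    exact ⟨encBA i P' ++ (true :: List.replicate (i p) false), by
      simp [encBA_append, encBA_cons, encBA_nil, blockBA]⟩

lemma split_true (W : List σ) (u v : List Bool)
    (h : encBA i W = u ++ true :: v) :
    (∃ P Q, W = P ++ Q ∧ u = encBA i P) ∨
    (∃ P Q, W = P ++ Q ∧ u ++ [true] = encBA i P ∧ v = encBA i Q) := by
  induction W generalizing u v with
  | nil => simp [encBA_nil] at h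
  | cons s W ihW =>
    rw [encBA_cons] at h
    cases u with
    | nil => exact Or.inl ⟨[], s :: W, rfl, rfl⟩
    | cons b u' =>
      simp only [blockBA, List.cons_append, List.cons.injEq] at h
      obtain ⟨hb, h⟩ := h
      rw [List.append_assoc, List.singleton_append] at h
      rcases rep_split (i s) _ _ _ h with ⟨h1, h2⟩ | ⟨a, h1, h2⟩
      · right
        refine ⟨[s], W, rfl, ?_, h2.symm⟩
        simp [← hb, h1, encBA_cons, encBA_nil, blockBA]
      · rcases ihW a v h2 with ⟨P, Q, hW, hu⟩ | ⟨P, Q, hW, hu, hv⟩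
        · left
          refine ⟨s :: P, Q, by simp [hW], ?_⟩
          simp [← hb, h1, encBA_cons, blockBA, hu]
        · right
          refine ⟨s :: P, Q, by simp [hW], ?_, hv⟩
          simp [← hb, h1, encBA_cons, blockBA, ← hu]

lemma pal_prefix (hpos : ∀ s, 1 ≤ i s) (W : List σ) (f r : List Bool)
    (hne : f ≠ []) (hpal : f.reverse = f) (h : encBA i W = f ++ r) :
    f = [true] ∨ ∃ P Q, W = P ++ Q ∧ f = encBA i P ∧ r = encBA i Q := by
  -- f's last element is true
  have hWne : W ≠ [] := by
    rintro rfl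
    rw [encBA_nil] at h
    exact hne (List.append_eq_nil_iff.mp h.symm).1
  obtain ⟨s, W', rfl⟩ := List.exists_cons_of_ne_nil hWne
  obtain ⟨t, ht⟩ := encBA_cons_shape i hpos s W'
  -- head of f is true
  obtain ⟨b, f', rfl⟩ := List.exists_cons_of_ne_nil hne
  have hb : b = true := by
    rw [ht] at h
    cases f' <;> simp_all
  subst hb
  cases f' with
  | nil => exact Or.inl rfl
  | cons c f'' =>
    have hf'ne : (c :: f'') ≠ [] := by simp
    have hud : c :: f'' = (c :: f'').dropLast ++ [(c :: f'').getLast hf'ne] :=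
      (List.dropLast_append_getLast hf'ne).symm
    set u := (c :: f'').dropLast with hu
    set d := (c :: f'').getLast hf'ne with hd
    have hdt : d = true := by
      rw [hud] at hpal
      simp [List.reverse_cons, List.reverse_append] at hpal
      tauto
    rw [hud, hdt] at h hpal ⊢
    rw [show (true :: (u ++ [true]) ++ r) = (true :: u) ++ true :: r by simp] at h
    rcases split_true i _ _ _ h with ⟨P, Q, hW, hP⟩ | ⟨P, Q, hW, hP, hQ⟩
    · -- f = encBA P ++ [true] with P nonempty : contradiction with palindrome
      exfalso
      have hPne : P ≠ [] := by rintro rfl; simp [encBA_nil] at hP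
      obtain ⟨p, P', rfl⟩ := List.exists_cons_of_ne_nil hPne
      obtain ⟨t1, ht1⟩ := encBA_cons_shape i hpos p P'
      have hrevne : (p :: P').reverse ≠ [] := by simp
      obtain ⟨q, Q', hq⟩ := List.exists_cons_of_ne_nil hrevne
      obtain ⟨t2, ht2⟩ := encBA_cons_shape i hpos q Q'
      have hrev : (true :: (u ++ [true])).reverse = true :: encBA i (p :: P').reverse := by
        have h0 : (true :: (u ++ [true])).reverse = true :: (true :: u).reverse := by simp
        rw [h0, hP, encBA_reverse]
      rw [hpal, hq, ht2] at hrev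
      have hu2 : u = false :: t1 := by
        rw [ht1] at hP
        simpa using hP
      rw [hu2] at hrev
      simp at hrev
    · exact Or.inr ⟨P, Q, hW, by rw [← hP]; simp, hQ⟩



lemma preserved_mono {W V : List σ} {f : List Bool} (h : W <:+: V) :
    Preserved i W f → Preserved i V f :=
  fun ⟨P, hi, hp, he⟩ => ⟨P, hi.trans h, hp, he⟩

lemma not_preserved_true (hpos : ∀ s, 1 ≤ i s) (S : List σ) :
    ¬ Preserved i S [true] := by
  rintro ⟨P, -, -, hP⟩
  cases P with
  | nil => simp [encBA_nil] at hP
  | cons p P' =>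
    obtain ⟨t, ht⟩ := encBA_cons_shape i hpos p P'
    rw [ht] at hP
    simp at hP

lemma count_encBA (P : List σ) : (encBA i P).count true = 2 * P.length := by
  induction P with
  | nil => simp [encBA_nil]
  | cons p P ih =>
    rw [encBA_cons, List.count_append, ih]
    simp [blockBA, List.count_cons, List.count_append, List.count_replicate]
    omega

lemma even_count_join (L : List (List Bool)) (h : ∀ f ∈ L, ∃ m, f.count true = 2 * m) :
    ∃ M, L.flatten.count true = 2 * M := by
  induction L with
  | nil => exact ⟨0, by simp⟩
  | cons f L ih =>
    obtain ⟨m, hm⟩ := h f (by simp)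
    obtain ⟨M, hM⟩ := ih (fun g hg => h g (by simp [hg]))
    exact ⟨m + M, by simp [List.count_append, hm, hM]; omega⟩

lemma scan_left (hinj : Function.Injective i) (hpos : ∀ s, 1 ≤ i s) :
    ∀ (F : List (List Bool)) (W : List σ), F.flatten = encBA i W →
    (∀ f ∈ F, f ≠ [] ∧ f.reverse = f) →
    (∀ f ∈ F, Preserved i W f) ∨
    ∃ F₁ F', F = F₁ ++ [true] :: F' ∧ ∀ f ∈ F₁, Preserved i W f := by
  intro F
  induction F with
  | nil => intro W _ _; left; simp
  | cons f F' ih =>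
    intro W hjoin hprops
    obtain ⟨hne, hpal⟩ := hprops f (by simp)
    have h : encBA i W = f ++ F'.flatten := by rw [← hjoin]; rfl
    rcases pal_prefix i hpos W f F'.flatten hne hpal h with rfl | ⟨P, Q, rfl, hf, hr⟩
    · exact Or.inr ⟨[], F', rfl, by simp⟩
    · have hPpal : P.reverse = P := by
        apply encBA_inj i hinj
        rw [← encBA_reverse, ← hf, hpal, hf]
      have hfpres : Preserved i (P ++ Q) f :=
        ⟨P, (List.prefix_append P Q).isInfix, hPpal, hf⟩
      have hQinf : Q <:+: P ++ Q := (List.suffix_append P Q).isInfix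
      rcases ih Q hr (fun g hg => hprops g (by simp [hg])) with hall | ⟨F₁, F'', hFeq, h1⟩
      · left
        intro g hg
        rcases List.mem_cons.mp hg with rfl | hg'
        · exact hfpres
        · exact preserved_mono i hQinf (hall g hg')
      · right
        refine ⟨f :: F₁, F'', by simp [hFeq], ?_⟩
        intro g hg
        rcases List.mem_cons.mp hg with rfl | hg'
        · exact hfpres
        · exact preserved_mono i hQinf (h1 g hg')

lemma parity_contra (S : List σ) (F₁ F₃ : List (List Bool))
    (hj : (F₁ ++ [[true]] ++ F₃).flatten = encBA i S)
    (h1 : ∀ f ∈ F₁, Preserved i S f) (h3 : ∀ f ∈ F₃, Preserved i S f) : False := by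
  have key : ∀ (L : List (List Bool)), (∀ f ∈ L, Preserved i S f) →
      ∃ M, L.flatten.count true = 2 * M := by
    intro L hL
    apply even_count_join
    intro f hf
    obtain ⟨P, -, -, rfl⟩ := hL f hf
    exact ⟨P.length, count_encBA i P⟩
  obtain ⟨M1, hM1⟩ := key F₁ h1
  obtain ⟨M3, hM3⟩ := key F₃ h3
  have hcount : (encBA i S).count true = 2 * S.length := count_encBA i S
  rw [← hj] at hcount
  simp only [List.flatten_append, List.count_append] at hcount
  rw [hM1, hM3] at hcount
  simp [List.count_singleton] at hcount
  omega


lemma preserved_of_rev {S : List σ} {f : List Bool}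
    (h : Preserved i S.reverse f) : Preserved i S f := by
  obtain ⟨P, hi, hp, he⟩ := h
  refine ⟨P, ?_, hp, he⟩
  have h2 := List.reverse_infix.mpr hi
  rw [hp, List.reverse_reverse] at h2
  exact h2

end Aux

theorem stmt10_aux {σ₂ : Type*} (i : σ₂ → ℕ) (hinj : Function.Injective i)
    (hpos : ∀ s, 1 ≤ i s) (S : List σ₂) (F : List (List Bool))
    (hjoin : F.flatten = encBA i S) (hprops : ∀ f ∈ F, f ≠ [] ∧ f.reverse = f)
    (hnp : ¬ ∀ f ∈ F, Preserved i S f) :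
    (∃ F₁ F₂ F₃ : List (List Bool),
        F = F₁ ++ [[true]] ++ F₂ ++ [[true]] ++ F₃ ∧
        (∀ f ∈ F₁, Preserved i S f) ∧ (∀ f ∈ F₃, Preserved i S f)) ∧
    ¬ F.Nodup := by
  -- left scan
  rcases scan_left i hinj hpos F S hjoin hprops with hall | ⟨F₁, F', hFeq, h1⟩
  · exact absurd hall hnp
  -- right scan, on the reversed factorization
  have hmapid : F.map List.reverse = F := by
    apply List.map_congr_left ?_ |>.trans (List.map_id F)
    exact fun f hf => (hprops f hf).2
  have hGjoin : F.reverse.flatten = encBA i S.reverse := by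
    rw [← encBA_reverse, ← hjoin, List.reverse_flatten, hmapid]
  have hGprops : ∀ f ∈ F.reverse, f ≠ [] ∧ f.reverse = f := by
    intro f hf; exact hprops f (List.mem_reverse.mp hf)
  rcases scan_left i hinj hpos F.reverse S.reverse hGjoin hGprops with hall | ⟨G₁, G₂, hGeq, hG1⟩
  · exfalso
    apply hnp
    intro f hf
    exact preserved_of_rev i (hall f (List.mem_reverse.mpr hf))
  have hF₃ : ∀ f ∈ G₁.reverse, Preserved i S f := by
    intro f hf
    exact preserved_of_rev i (hG1 f (List.mem_reverse.mp hf))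
  have hFeq2 : F = G₂.reverse ++ ([[true]] ++ G₁.reverse) := by
    rw [← List.reverse_reverse F, hGeq]
    simp
  rw [hFeq2] at hFeq
  rw [show F₁ ++ [true] :: F' = F₁ ++ ([[true]] ++ F') by simp] at hFeq
  rcases List.append_eq_append_iff.mp hFeq.symm with ⟨a', hc, hb⟩ | ⟨c', ha, hd⟩
  · cases a' with
    | nil =>
      exfalso
      simp at hb hc
      refine parity_contra i S F₁ G₁.reverse ?_ h1 hF₃
      rw [← hjoin, hFeq2, hc]
      simp [hb]
    | cons x a'' =>
      simp only [List.cons_append, List.cons.injEq, List.singleton_append] at hb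
      obtain ⟨hx, hb'⟩ := hb
      subst hx
      constructor
      · refine ⟨F₁, a'', G₁.reverse, ?_, h1, hF₃⟩
        rw [hFeq2, hc]
        simp
      · intro hnd
        rw [hFeq2, hc] at hnd
        have := List.nodup_iff_count_le_one.mp hnd [true]
        simp [List.count_append, List.count_cons] at this
        omega
  · cases c' with
    | nil =>
      exfalso
      simp at ha hd
      refine parity_contra i S F₁ G₁.reverse ?_ h1 hF₃
      rw [← hjoin, hFeq2, ha]
      simp
    | cons x c'' =>
      exfalso
      simp only [List.cons_append, List.cons.injEq, List.singleton_append] at hd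
      obtain ⟨hx, -⟩ := hd
      have : [true] ∈ F₁ := by rw [ha, ← hx]; simp
      exact not_preserved_true i hpos S (h1 [true] this)

/-- If a palindromic factorization of `δ(S)` is not composed entirely of preserved
palindromes, then it begins with preserved palindromes followed by a single factor `b`,
ends with a single factor `b` followed by preserved palindromes, these two `b` factors
occupying distinct positions; hence it is not diverse. -/
theorem stmt10 {σ : Type*} (i : σ → ℕ) (hinj : Function.Injective i)
    (hpos : ∀ s, 1 ≤ i s) (S : List σ) (F : List (List Bool))
    (hF : PalFact (encBA i S) F)
    (hnp : ¬ ∀ f ∈ F, Preserved i S f) :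
    (∃ F₁ F₂ F₃ : List (List Bool),
        F = F₁ ++ [[true]] ++ F₂ ++ [[true]] ++ F₃ ∧
        (∀ f ∈ F₁, Preserved i S f) ∧ (∀ f ∈ F₃, Preserved i S f)) ∧
    ¬ F.Nodup := by
  obtain ⟨hjoin, hprops⟩ := hF
  exact stmt10_aux i hinj hpos S F hjoin hprops hnp
end

section
/- For any k ≥ 1, let Q_k be the prefix of length 20k of (abbaab)^∞. Then every k-diverse palindromic factorization of Q_k uses each of the eight palindromes a, b, aa, bb, aba, bab, abba, baab exactly k times, and such a factorization exists (e.g., k copies of (abba, aba, bb, aa, bab, baab) followed by 2k single-symbol factors). -/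
/-- `F` is a `k`-diverse palindromic factorization of `S`: nonempty palindromic factors
concatenating to `S`, each distinct factor appearing at most `k` times. -/
def KDivPalFact {α : Type*} [DecidableEq α] (k : ℕ) (S : List α) (F : List (List α)) : Prop :=
  F.flatten = S ∧ (∀ f ∈ F, f ≠ [] ∧ f.reverse = f) ∧ ∀ f : List α, F.count f ≤ k

/-- The length-`20k` prefix of `(abbaab)^∞` over `Bool` (`a = false`, `b = true`). -/
def Qk (k : ℕ) : List Bool :=
  ((List.replicate (4 * k) [false, true, true, false, false, true]).flatten).take (20 * k)

private def cw : List Bool := [false, true, true, false, false, true]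

private def gw : ℕ → Bool := fun i => cw.getD (i % 6) false

private def L8 : List (List Bool) :=
  [[false], [true], [false, false], [true, true],
   [false, true, false], [true, false, true],
   [false, true, true, false], [true, false, false, true]]

private def Bk : List (List Bool) :=
  [[false, true, true, false], [false, true, false], [true, true],
   [false, false], [true, false, true], [true, false, false, true]]

private lemma gw_mod (a b : ℕ) : gw (a % 6 + b) = gw (a + b) := by
  unfold gw; congr 1; omega

private lemma length_repjoin (m : ℕ) : ((List.replicate m cw).flatten).length = 6 * m := by
  simp [List.length_flatten, List.map_replicate, cw]; ring

private lemma getElem_repjoin : ∀ (m i : ℕ) (h : i < ((List.replicate m cw).flatten).length),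
    ((List.replicate m cw).flatten)[i] = gw i := by
  intro m
  induction m with
  | zero => intro i h; simp at h
  | succ m ih =>
    intro i h
    simp only [List.replicate_succ, List.flatten_cons] at h ⊢
    by_cases hi : i < cw.length
    · rw [List.getElem_append_left hi]
      have hi6 : i < 6 := by simpa [cw] using hi
      unfold gw
      interval_cases i <;> rfl
    · push_neg at hi
      rw [List.getElem_append_right hi]
      rw [ih]
      have : (i - cw.length) % 6 = i % 6 := by
        simp only [cw, List.length_cons, List.length_nil] at hi ⊢
        omega
      unfold gw
      rw [this]

private lemma qk_eq (k : ℕ) : Qk k = ((List.replicate (4 * k) cw).flatten).take (20 * k) := rfl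

private lemma qk_length (k : ℕ) : (Qk k).length = 20 * k := by
  rw [qk_eq, List.length_take, length_repjoin]
  omega

private lemma qk_get (k i : ℕ) (h : i < (Qk k).length) : (Qk k)[i] = gw i := by
  have h2 : i < 20 * k := by rwa [qk_length] at h
  simp only [qk_eq] at h ⊢
  rw [List.getElem_take]
  exact getElem_repjoin _ _ _

private lemma pal_mem {k : ℕ} {f : List Bool} (hf : f <:+: Qk k) (hne : f ≠ [])
    (hpal : f.reverse = f) : f ∈ L8 := by
  obtain ⟨p, t, hpt⟩ := hf
  have hlq : (Qk k).length = 20 * k := qk_length k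
  have hlen : p.length + f.length + t.length = 20 * k := by
    rw [← hlq, ← hpt]; simp; ring
  have hget : ∀ j (hj : j < f.length), f[j] = gw (p.length + j) := by
    intro j hj
    have h1 : p.length + j < (Qk k).length := by omega
    have h2 : (Qk k)[p.length + j]'h1 = gw (p.length + j) := qk_get k _ h1
    rw [← h2, List.getElem_of_eq hpt.symm]
    have hl : p.length + j < (p ++ f).length := by simp; omega
    rw [List.getElem_append_left hl]
    rw [List.getElem_append_right (by omega : p.length ≤ p.length + j)]
    congr 1
    omega
  have hn1 : 1 ≤ f.length := List.length_pos_iff.mpr hne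
  have hpal' : ∀ j (hj : j < f.length), f[j] = f[f.length - 1 - j]'(by omega) := by
    intro j hj
    rw [List.getElem_of_eq hpal.symm hj, List.getElem_reverse]
  by_cases h5 : 5 ≤ f.length
  · exfalso
    have key : ∀ r r' : Fin 6, ∃ j : Fin 5,
        gw (r.val + j.val) ≠ gw (r'.val + (4 - j.val)) := by decide
    obtain ⟨j, hj⟩ := key ⟨p.length % 6, by omega⟩ ⟨(p.length + (f.length - 5)) % 6, by omega⟩
    apply hj
    have hj5 : (j : ℕ) < 5 := j.isLt
    calc gw (p.length % 6 + j) = gw (p.length + j) := gw_mod _ _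
      _ = f[j]'(by omega) := (hget j (by omega)).symm
      _ = f[f.length - 1 - j]'(by omega) := hpal' j (by omega)
      _ = gw (p.length + (f.length - 1 - j)) := hget _ (by omega)
      _ = gw (p.length + (f.length - 5) + (4 - j)) := by congr 1; omega
      _ = gw ((p.length + (f.length - 5)) % 6 + (4 - j)) := (gw_mod _ _).symm
  · push_neg at h5
    obtain ⟨n, hn⟩ : ∃ n, f.length = n := ⟨_, rfl⟩
    obtain ⟨r, hr6, hrs⟩ : ∃ r, r < 6 ∧ p.length % 6 = r := ⟨_, by omega, rfl⟩
    have hfeq : f = List.ofFn (fun j : Fin n => gw (r + j.val)) := by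
      apply List.ext_getElem (by simp [hn])
      intro i h1 h2
      simp only [List.getElem_ofFn]
      rw [← hrs, gw_mod]
      exact hget i h1
    rw [hfeq] at hpal ⊢
    have hn1' : 1 ≤ n := by omega
    have hn4 : n ≤ 4 := by omega
    clear hfeq hpal' hget hlen hpt hne hn hrs
    revert hpal
    interval_cases n <;> interval_cases r <;> decide

private lemma count_sum : ∀ F : List (List Bool), (∀ f ∈ F, f ∈ L8) →
    F.flatten.length = F.count [false] + F.count [true]
      + 2 * F.count [false, false] + 2 * F.count [true, true]
      + 3 * F.count [false, true, false] + 3 * F.count [true, false, true]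
      + 4 * F.count [false, true, true, false] + 4 * F.count [true, false, false, true] := by
  intro F
  induction F with
  | nil => simp
  | cons f F ih =>
    intro h
    have hf : f ∈ L8 := h f List.mem_cons_self
    have hF := ih (fun x hx => h x (List.mem_cons_of_mem _ hx))
    simp only [L8, List.mem_cons, List.not_mem_nil, or_false] at hf
    rcases hf with rfl | rfl | rfl | rfl | rfl | rfl | rfl | rfl <;>
      simp only [List.flatten_cons, List.length_append, List.count_cons, hF] <;>
      simp <;> omega

private lemma length_eq_count (l : List Bool) : l.length = l.count false + l.count true := by
  induction l with
  | nil => simp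
  | cons b l ih =>
    rw [List.length_cons, List.count_cons, List.count_cons, ih]
    cases b <;> simp <;> omega

private lemma count_take_repjoin : ∀ (m n : ℕ), n ≤ 6 * m →
    (((List.replicate m cw).flatten).take n).count false
      = 3 * (n / 6) + [0, 1, 1, 1, 2, 3].getD (n % 6) 0 := by
  intro m
  induction m with
  | zero => intro n hn; interval_cases n; simp
  | succ m ih =>
    intro n hn
    simp only [List.replicate_succ, List.flatten_cons, List.take_append,
      List.count_append]
    by_cases h6 : n ≤ 6
    · have h0 : n - cw.length = 0 := by simp [cw]; omega
      rw [h0]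
      interval_cases n <;> simp <;> decide
    · push_neg at h6
      have h1 : cw.take n = cw := List.take_of_length_le (by simp [cw]; omega)
      rw [h1, ih (n - cw.length) (by simp [cw]; omega)]
      have e1 : (n - cw.length) % 6 = n % 6 := by simp [cw]; omega
      have e2 : (n - cw.length) / 6 = n / 6 - 1 := by simp [cw]; omega
      rw [e1, e2]
      have h3 : cw.count false = 3 := by decide
      rw [h3]
      have h4 : 1 ≤ n / 6 := by omega
      generalize [0, 1, 1, 1, 2, 3].getD (n % 6) 0 = T
      omega

private lemma Bflat : ∀ k : ℕ,
    ((List.replicate k Bk).flatten).flatten = (List.replicate (3 * k) cw).flatten := by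
  intro k
  induction k with
  | zero => rfl
  | succ k ih =>
    rw [List.replicate_succ, List.flatten_cons, List.flatten_append, ih,
      show 3 * (k + 1) = 3 + 3 * k by ring, List.replicate_add, List.flatten_append]
    rfl

private lemma count_repflat (x : List Bool) : ∀ k : ℕ,
    ((List.replicate k Bk).flatten).count x = k * Bk.count x := by
  intro k
  induction k with
  | zero => simp
  | succ k ih =>
    rw [List.replicate_succ, List.flatten_cons, List.count_append, ih]
    ring

private lemma count_map_single (b : Bool) (l : List Bool) :
    (l.map (fun x => [x])).count [b] = l.count b := by
  induction l with
  | nil => rfl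
  | cons a l ih =>
    rw [List.map_cons, List.count_cons, List.count_cons, ih]
    cases a <;> cases b <;> simp

private lemma flat_map_singleton (l : List Bool) :
    (l.map (fun x => [x])).flatten = l := by
  induction l with
  | nil => rfl
  | cons b l ih => simp [ih]

private lemma qk_split (k : ℕ) :
    Qk k = (List.replicate (3 * k) cw).flatten
      ++ ((List.replicate k cw).flatten).take (2 * k) := by
  rw [qk_eq, show 4 * k = 3 * k + k by ring, List.replicate_add, List.flatten_append,
    List.take_append, List.take_of_length_le (by rw [length_repjoin]; omega),
    length_repjoin, show 20 * k - 6 * (3 * k) = 2 * k by omega]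

private lemma tail_counts {k : ℕ} :
    (((List.replicate k cw).flatten).take (2 * k)).count false = k ∧
    (((List.replicate k cw).flatten).take (2 * k)).count true = k := by
  have hc := count_take_repjoin k (2 * k) (by omega)
  have hm : 2 * k % 6 = 0 ∨ 2 * k % 6 = 2 ∨ 2 * k % 6 = 4 := by omega
  have hF : (((List.replicate k cw).flatten).take (2 * k)).count false = k := by
    rcases hm with hm | hm | hm <;> rw [hm] at hc <;> simp at hc <;> omega
  refine ⟨hF, ?_⟩
  have hl : (((List.replicate k cw).flatten).take (2 * k)).length = 2 * k := by
    rw [List.length_take, length_repjoin]; omega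
  have := length_eq_count (((List.replicate k cw).flatten).take (2 * k))
  omega

/-- For `k ≥ 1`, every `k`-diverse palindromic factorization of `Q_k` uses each of the
eight palindromes `a, b, aa, bb, aba, bab, abba, baab` exactly `k` times, and such a
factorization exists. -/
theorem stmt12 (k : ℕ) (hk : 1 ≤ k) :
    (∀ F : List (List Bool), KDivPalFact k (Qk k) F →
      ∀ p ∈ [[false], [true], [false, false], [true, true],
             [false, true, false], [true, false, true],
             [false, true, true, false], [true, false, false, true]],
        F.count p = k) ∧
    (∃ F : List (List Bool), KDivPalFact k (Qk k) F) := by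
  constructor
  · intro F hF p hp
    obtain ⟨hjoin, hpal, hcnt⟩ := hF
    replace hjoin : F.flatten = Qk k := hjoin
    have hmem : ∀ f ∈ F, f ∈ L8 := fun f hf =>
      pal_mem (hjoin ▸ List.infix_of_mem_flatten hf) (hpal f hf).1 (hpal f hf).2
    have hsum := count_sum F hmem
    rw [hjoin, qk_length] at hsum
    have h1 := hcnt [false]
    have h2 := hcnt [true]
    have h3 := hcnt [false, false]
    have h4 := hcnt [true, true]
    have h5 := hcnt [false, true, false]
    have h6 := hcnt [true, false, true]
    have h7 := hcnt [false, true, true, false]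
    have h8 := hcnt [true, false, false, true]
    fin_cases hp <;> omega
  · refine ⟨(List.replicate k Bk).flatten
      ++ ((((List.replicate k cw).flatten).take (2 * k)).map (fun x => [x])), ?_, ?_, ?_⟩
    · show ((List.replicate k Bk).flatten ++ _).flatten = Qk k
      rw [List.flatten_append, Bflat, flat_map_singleton, qk_split]
    · intro f hf
      rcases List.mem_append.mp hf with hf | hf
      · obtain ⟨l, hl, hfl⟩ := List.mem_flatten.mp hf
        rw [List.eq_of_mem_replicate hl] at hfl
        fin_cases hfl <;> exact ⟨by decide, by decide⟩
      · obtain ⟨x, _, rfl⟩ := List.mem_map.mp hf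
        exact ⟨by simp, by simp⟩
    · intro f
      rw [List.count_append, count_repflat]
      have hBle : Bk.count f ≤ 1 := by
        by_cases hm : f ∈ Bk
        · fin_cases hm <;> decide
        · rw [List.count_eq_zero.mpr hm]
          omega
      by_cases hfa : f = [false]
      · subst hfa
        rw [show Bk.count [false] = 0 by decide, count_map_single, tail_counts.1]
        omega
      · by_cases hfb : f = [true]
        · subst hfb
          rw [show Bk.count [true] = 0 by decide, count_map_single, tail_counts.2]
          omega
        · have hT : (((((List.replicate k cw).flatten).take (2 * k)).map
              (fun x => [x]))).count f = 0 := by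
            rw [List.count_eq_zero]
            intro hmem
            obtain ⟨x, _, hx⟩ := List.mem_map.mp hmem
            cases x
            · exact hfa hx.symm
            · exact hfb hx.symm
          rw [hT]
          have h2 : k * Bk.count f ≤ k * 1 := Nat.mul_le_mul_left k hBle
          simpa using h2
end
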